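/- Let α ∈ ℝ, ε > 0, and let μ = (μ_{ij}) be a d×d matrix of finite signed Borel measures on [0,∞) with ∫_{[0,∞)} e^{−(α−ε) s} d|μ_{ij}|(s) < ∞ for all i,j. Let λ_1, …, λ_N ∈ ℂ with Re(λ_j) = α for each j, and let K_1, …, K_N ∈ ℂ^{d×d} satisfy (λ_j I_d − μ̂(λ_j)) K_j = 0 for each j, where μ̂(λ)_{ik} = ∫_{[0,∞)} e^{−λ s} dμ_{ik}(s). Let r : [0,∞) → ℝ^{d×d} be differentiable with r′(t) = ∫_{[0,t]} μ(ds) r(t−s) for t ≥ 0, set S(t) = Σ_{j=1}^N e^{λ_j t} K_j and R(t) = r(t) − S(t), and suppose there is M > 0 with ‖R(t)‖ ≤ M e^{(α−ε) t} for all t ≥ 0. Then R′(t) = O(e^{(α−ε) t}) as t → ∞. -/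

import Mathlib

open MeasureTheory Set Filter Matrix

/-- Integral of a vector-valued function against a finite signed Borel measure on a set,
via the Jordan decomposition. -/
noncomputable def sInt {E : Type*} [NormedAddCommGroup E] [NormedSpace ℝ E]
    (μ : MeasureTheory.SignedMeasure ℝ) (A : Set ℝ) (f : ℝ → E) : E :=
  (∫ s in A, f s ∂μ.toJordanDecomposition.posPart) -
    ∫ s in A, f s ∂μ.toJordanDecomposition.negPart

/-- Frobenius norm of a complex matrix. -/
noncomputable def frobC {d e : ℕ} (A : Matrix (Fin d) (Fin e) ℂ) : ℝ :=
  Real.sqrt (∑ i, ∑ j, ‖A i j‖ ^ 2)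

/-- The Laplace transform `μ̂(λ)` of a `d × d` matrix of finite signed Borel measures
supported on `[0,∞)`. -/
noncomputable def muHat {d : ℕ} (μ : Matrix (Fin d) (Fin d) (MeasureTheory.SignedMeasure ℝ))
    (lam : ℂ) : Matrix (Fin d) (Fin d) ℂ :=
  Matrix.of fun i j => sInt (μ i j) (Ici 0) (fun s => Complex.exp (-(lam * s)))

/-- The convolution `∫_{[0,t]} μ(ds) r(t−s)`. -/
noncomputable def measConv {d : ℕ}
    (μ : Matrix (Fin d) (Fin d) (MeasureTheory.SignedMeasure ℝ))
    (r : ℝ → Matrix (Fin d) (Fin d) ℝ) (t : ℝ) : Matrix (Fin d) (Fin d) ℝ :=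
  Matrix.of fun i k => ∑ j, sInt (μ i j) (Icc 0 t) (fun s => r (t - s) j k)

section helpers

lemma pos_le_tv (ν : SignedMeasure ℝ) :
    ν.toJordanDecomposition.posPart ≤ ν.totalVariation :=
  Measure.le_add_right le_rfl

lemma neg_le_tv (ν : SignedMeasure ℝ) :
    ν.toJordanDecomposition.negPart ≤ ν.totalVariation :=
  Measure.le_add_left le_rfl

lemma frobC_le_sum {d e : ℕ} (A : Matrix (Fin d) (Fin e) ℂ) :
    frobC A ≤ ∑ i, ∑ j, ‖A i j‖ := by
  rw [frobC]
  have h1 : (∑ i, ∑ j, ‖A i j‖ ^ 2) ≤ (∑ i, ∑ j, ‖A i j‖) ^ 2 := by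
    calc ∑ i, ∑ j, ‖A i j‖ ^ 2 ≤ ∑ i, (∑ j, ‖A i j‖) ^ 2 := by
          apply Finset.sum_le_sum
          intro i _
          exact Finset.sum_sq_le_sq_sum_of_nonneg (fun j _ => norm_nonneg _)
      _ ≤ (∑ i, ∑ j, ‖A i j‖) ^ 2 :=
          Finset.sum_sq_le_sq_sum_of_nonneg
            (fun i _ => Finset.sum_nonneg fun j _ => norm_nonneg _)
  calc Real.sqrt (∑ i, ∑ j, ‖A i j‖ ^ 2) ≤ Real.sqrt ((∑ i, ∑ j, ‖A i j‖) ^ 2) :=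
        Real.sqrt_le_sqrt h1
    _ = _ := Real.sqrt_sq (Finset.sum_nonneg fun i _ =>
        Finset.sum_nonneg fun j _ => norm_nonneg _)

lemma entry_le_frobC {d e : ℕ} (A : Matrix (Fin d) (Fin e) ℂ) (i : Fin d) (j : Fin e) :
    ‖A i j‖ ≤ frobC A := by
  rw [frobC]
  have : ‖A i j‖ ^ 2 ≤ ∑ i', ∑ j', ‖A i' j'‖ ^ 2 := by
    calc ‖A i j‖ ^ 2 ≤ ∑ j', ‖A i j'‖ ^ 2 :=
          Finset.single_le_sum (f := fun j' => ‖A i j'‖ ^ 2)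
            (fun j' _ => sq_nonneg _) (Finset.mem_univ j)
      _ ≤ ∑ i', ∑ j', ‖A i' j'‖ ^ 2 :=
          Finset.single_le_sum (f := fun i' => ∑ j', ‖A i' j'‖ ^ 2)
            (fun i' _ => Finset.sum_nonneg fun j' _ => sq_nonneg _) (Finset.mem_univ i)
  calc ‖A i j‖ = Real.sqrt (‖A i j‖ ^ 2) := (Real.sqrt_sq (norm_nonneg _)).symm
    _ ≤ _ := Real.sqrt_le_sqrt this

/-- key norm bound for `sInt`. -/
lemma norm_sInt_le (ν : SignedMeasure ℝ) {A : Set ℝ} (hA : MeasurableSet A)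
    (f : ℝ → ℂ) (g : ℝ → ℝ) (hfg : ∀ s ∈ A, ‖f s‖ ≤ g s)
    (hg : IntegrableOn g A ν.totalVariation)
    (hf : AEStronglyMeasurable f (ν.totalVariation.restrict A)) :
    ‖sInt ν A f‖ ≤ ∫ s in A, g s ∂ν.totalVariation := by
  set P := ν.toJordanDecomposition.posPart
  set Nm := ν.toJordanDecomposition.negPart
  have hPle : P.restrict A ≤ ν.totalVariation.restrict A :=
    Measure.restrict_mono (le_refl A) (pos_le_tv ν)
  have hNle : Nm.restrict A ≤ ν.totalVariation.restrict A :=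
    Measure.restrict_mono (le_refl A) (neg_le_tv ν)
  have hae : ∀ᵐ s ∂(ν.totalVariation.restrict A), ‖f s‖ ≤ g s :=
    (ae_restrict_iff' hA).2 (ae_of_all _ hfg)
  have hgP : IntegrableOn g A P := hg.mono_measure (pos_le_tv ν)
  have hgN : IntegrableOn g A Nm := hg.mono_measure (neg_le_tv ν)
  have hfP : IntegrableOn f A P :=
    hgP.mono' (hf.mono_measure hPle) (hae.filter_mono (ae_mono hPle))
  have hfN : IntegrableOn f A Nm :=
    hgN.mono' (hf.mono_measure hNle) (hae.filter_mono (ae_mono hNle))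
  have hP : ‖∫ s in A, f s ∂P‖ ≤ ∫ s in A, g s ∂P :=
    norm_integral_le_of_norm_le hgP (hae.filter_mono (ae_mono hPle))
  have hN : ‖∫ s in A, f s ∂Nm‖ ≤ ∫ s in A, g s ∂Nm :=
    norm_integral_le_of_norm_le hgN (hae.filter_mono (ae_mono hNle))
  have hsum : ∫ s in A, g s ∂P + ∫ s in A, g s ∂Nm = ∫ s in A, g s ∂ν.totalVariation := by
    have : ν.totalVariation.restrict A = P.restrict A + Nm.restrict A := by
      show (P + Nm).restrict A = _
      simp [Measure.restrict_add]
    rw [show (∫ s in A, g s ∂ν.totalVariation) = ∫ s, g s ∂(ν.totalVariation.restrict A) from rfl,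
      this, integral_add_measure hgP hgN]
  calc ‖sInt ν A f‖ ≤ ‖∫ s in A, f s ∂P‖ + ‖∫ s in A, f s ∂Nm‖ := norm_sub_le _ _
    _ ≤ ∫ s in A, g s ∂P + ∫ s in A, g s ∂Nm := add_le_add hP hN
    _ = _ := hsum

lemma sInt_const_mul (ν : SignedMeasure ℝ) (A : Set ℝ) (c : ℂ) (f : ℝ → ℂ) :
    sInt ν A (fun s => c * f s) = c * sInt ν A f := by
  simp only [sInt, integral_const_mul, mul_sub]

lemma sInt_ofReal (ν : SignedMeasure ℝ) (A : Set ℝ) (f : ℝ → ℝ) :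
    (Complex.ofReal (sInt ν A f)) = sInt ν A (fun s => (f s : ℂ)) := by
  simp only [sInt, Complex.ofReal_sub]
  congr 1 <;> exact integral_ofReal.symm

lemma sInt_union (ν : SignedMeasure ℝ) {A B : Set ℝ} (hAB : Disjoint A B)
    (hB : MeasurableSet B) (f : ℝ → ℂ)
    (hfA : IntegrableOn f A ν.totalVariation) (hfB : IntegrableOn f B ν.totalVariation) :
    sInt ν (A ∪ B) f = sInt ν A f + sInt ν B f := by
  have h1 := setIntegral_union hAB hB (hfA.mono_measure (pos_le_tv ν))
    (hfB.mono_measure (pos_le_tv ν))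
  have h2 := setIntegral_union hAB hB (hfA.mono_measure (neg_le_tv ν))
    (hfB.mono_measure (neg_le_tv ν))
  simp only [sInt, h1, h2]
  ring

lemma sInt_sub (ν : SignedMeasure ℝ) (A : Set ℝ) (f g : ℝ → ℂ)
    (hf : IntegrableOn f A ν.totalVariation) (hg : IntegrableOn g A ν.totalVariation) :
    sInt ν A (fun s => f s - g s) = sInt ν A f - sInt ν A g := by
  have hfP := hf.mono_measure (pos_le_tv ν)
  have hfN := hf.mono_measure (neg_le_tv ν)
  have hgP := hg.mono_measure (pos_le_tv ν)
  have hgN := hg.mono_measure (neg_le_tv ν)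
  simp only [sInt, integral_sub hfP hgP, integral_sub hfN hgN]
  ring

lemma sInt_finset_sum (ν : SignedMeasure ℝ) (A : Set ℝ) {ι : Type*} (s : Finset ι)
    (f : ι → ℝ → ℂ) (hf : ∀ i ∈ s, IntegrableOn (f i) A ν.totalVariation) :
    sInt ν A (fun x => ∑ i ∈ s, f i x) = ∑ i ∈ s, sInt ν A (f i) := by
  have hP : ∀ i ∈ s, IntegrableOn (f i) A ν.toJordanDecomposition.posPart :=
    fun i hi => (hf i hi).mono_measure (pos_le_tv ν)
  have hN : ∀ i ∈ s, IntegrableOn (f i) A ν.toJordanDecomposition.negPart :=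
    fun i hi => (hf i hi).mono_measure (neg_le_tv ν)
  simp only [sInt, integral_finset_sum s hP, integral_finset_sum s hN,
    Finset.sum_sub_distrib]

end helpers

section aux

variable {α ε : ℝ} (ν : SignedMeasure ℝ)

/-- norm of the shifted exponential integrand -/
lemma norm_exp_shift (lamm : ℂ) (hl : lamm.re = α) (c : ℂ) (t s : ℝ) :
    ‖c * Complex.exp (lamm * ((t : ℂ) - (s : ℂ)))‖ = ‖c‖ * Real.exp (α * (t - s)) := by
  rw [norm_mul, Complex.norm_exp]
  congr 2
  have : ((t : ℂ) - (s : ℂ)) = ((t - s : ℝ) : ℂ) := by push_cast; ring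
  rw [this]
  simp [Complex.mul_re, hl]

lemma exp_shift_integrable (hε : 0 < ε)
    (hint : IntegrableOn (fun s => Real.exp (-((α - ε) * s))) (Ici 0) ν.totalVariation)
    (lamm : ℂ) (hl : lamm.re = α) (c : ℂ) (t : ℝ) (ht : 0 ≤ t) :
    IntegrableOn (fun s : ℝ => c * Complex.exp (lamm * ((t : ℂ) - (s : ℂ)))) (Ici 0)
      ν.totalVariation := by
  have hintc : IntegrableOn
      (fun s => (‖c‖ * Real.exp (α * t)) * Real.exp (-((α - ε) * s))) (Ici 0)
      ν.totalVariation := hint.const_mul _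
  refine hintc.mono' ?_ ?_
  · have hcont : Continuous fun s : ℝ => c * Complex.exp (lamm * ((t : ℂ) - (s : ℂ))) := by
      fun_prop
    exact hcont.aestronglyMeasurable
  · rw [ae_restrict_iff' measurableSet_Ici]
    refine ae_of_all _ fun s hs => ?_
    rw [norm_exp_shift lamm hl c t s]
    have h1 : α * (t - s) ≤ α * t + -((α - ε) * s) := by
      have : 0 ≤ ε * s := mul_nonneg hε.le hs
      nlinarith
    calc ‖c‖ * Real.exp (α * (t - s))
        ≤ ‖c‖ * (Real.exp (α * t) * Real.exp (-((α - ε) * s))) := by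
          rw [← Real.exp_add]
          exact mul_le_mul_of_nonneg_left (Real.exp_le_exp.2 h1) (norm_nonneg c)
      _ = (‖c‖ * Real.exp (α * t)) * Real.exp (-((α - ε) * s)) := by ring

/-- Generic Icc bound. -/
lemma icc_bound (hε : 0 < ε)
    (hint : IntegrableOn (fun s => Real.exp (-((α - ε) * s))) (Ici 0) ν.totalVariation)
    (t : ℝ) (ht : 0 ≤ t) (M : ℝ) (hM : 0 ≤ M) (f : ℝ → ℂ)
    (hf : ∀ s ∈ Icc 0 t, ‖f s‖ ≤ M * Real.exp ((α - ε) * (t - s)))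
    (hmeas : AEStronglyMeasurable f (ν.totalVariation.restrict (Icc 0 t))) :
    ‖sInt ν (Icc 0 t) f‖ ≤
      M * (∫ s in Ici 0, Real.exp (-((α - ε) * s)) ∂ν.totalVariation) *
        Real.exp ((α - ε) * t) := by
  have hb : ∀ s ∈ Icc 0 t, ‖f s‖ ≤
      (M * Real.exp ((α - ε) * t)) * Real.exp (-((α - ε) * s)) := by
    intro s hs
    refine (hf s hs).trans (le_of_eq ?_)
    rw [mul_assoc, ← Real.exp_add]
    ring_nf
  have hgint : IntegrableOn
      (fun s => (M * Real.exp ((α - ε) * t)) * Real.exp (-((α - ε) * s))) (Icc 0 t)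
      ν.totalVariation := (hint.mono_set Icc_subset_Ici_self).const_mul _
  refine (norm_sInt_le ν measurableSet_Icc f _ hb hgint hmeas).trans ?_
  rw [integral_const_mul]
  have h2 : (∫ s in Icc 0 t, Real.exp (-((α - ε) * s)) ∂ν.totalVariation) ≤
      ∫ s in Ici 0, Real.exp (-((α - ε) * s)) ∂ν.totalVariation :=
    setIntegral_mono_set hint (ae_of_all _ fun s => (Real.exp_pos _).le)
      Icc_subset_Ici_self.eventuallyLE
  calc M * Real.exp ((α - ε) * t) *
        (∫ s in Icc 0 t, Real.exp (-((α - ε) * s)) ∂ν.totalVariation)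
      ≤ M * Real.exp ((α - ε) * t) *
        (∫ s in Ici 0, Real.exp (-((α - ε) * s)) ∂ν.totalVariation) := by
        exact mul_le_mul_of_nonneg_left h2 (by positivity)
    _ = _ := by ring

/-- Tail bound on `Ioi t`. -/
lemma tail_bound (hε : 0 < ε)
    (hint : IntegrableOn (fun s => Real.exp (-((α - ε) * s))) (Ici 0) ν.totalVariation)
    (lamm : ℂ) (hl : lamm.re = α) (c : ℂ) (t : ℝ) (ht : 0 ≤ t) :
    ‖sInt ν (Ioi t) (fun s : ℝ => c * Complex.exp (lamm * ((t : ℂ) - (s : ℂ))))‖ ≤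
      ‖c‖ * (∫ s in Ici 0, Real.exp (-((α - ε) * s)) ∂ν.totalVariation) *
        Real.exp ((α - ε) * t) := by
  have hsub : Ioi t ⊆ Ici (0 : ℝ) := fun s hs => le_trans ht (le_of_lt hs)
  have hb : ∀ s ∈ Ioi t, ‖c * Complex.exp (lamm * ((t : ℂ) - (s : ℂ)))‖ ≤
      (‖c‖ * Real.exp ((α - ε) * t)) * Real.exp (-((α - ε) * s)) := by
    intro s hs
    rw [norm_exp_shift lamm hl c t s]
    have h1 : α * (t - s) ≤ (α - ε) * t + -((α - ε) * s) := by
      have : t ≤ s := (le_of_lt hs)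
      nlinarith [sub_nonneg.2 this, hε.le]
    calc ‖c‖ * Real.exp (α * (t - s))
        ≤ ‖c‖ * (Real.exp ((α - ε) * t) * Real.exp (-((α - ε) * s))) := by
          rw [← Real.exp_add]
          exact mul_le_mul_of_nonneg_left (Real.exp_le_exp.2 h1) (norm_nonneg c)
      _ = _ := by ring
  have hgint : IntegrableOn
      (fun s => (‖c‖ * Real.exp ((α - ε) * t)) * Real.exp (-((α - ε) * s))) (Ioi t)
      ν.totalVariation := (hint.mono_set hsub).const_mul _
  have hmeas : AEStronglyMeasurable
      (fun s : ℝ => c * Complex.exp (lamm * ((t : ℂ) - (s : ℂ))))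
      (ν.totalVariation.restrict (Ioi t)) :=
  by
    have hcont : Continuous fun s : ℝ => c * Complex.exp (lamm * ((t : ℂ) - (s : ℂ))) := by
      fun_prop
    exact hcont.aestronglyMeasurable
  refine (norm_sInt_le ν measurableSet_Ioi _ _ hb hgint hmeas).trans ?_
  rw [integral_const_mul]
  have h2 : (∫ s in Ioi t, Real.exp (-((α - ε) * s)) ∂ν.totalVariation) ≤
      ∫ s in Ici 0, Real.exp (-((α - ε) * s)) ∂ν.totalVariation :=
    setIntegral_mono_set hint (ae_of_all _ fun s => (Real.exp_pos _).le)
      hsub.eventuallyLE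
  calc ‖c‖ * Real.exp ((α - ε) * t) *
        (∫ s in Ioi t, Real.exp (-((α - ε) * s)) ∂ν.totalVariation)
      ≤ ‖c‖ * Real.exp ((α - ε) * t) *
        (∫ s in Ici 0, Real.exp (-((α - ε) * s)) ∂ν.totalVariation) :=
        mul_le_mul_of_nonneg_left h2 (by positivity)
    _ = _ := by ring

end aux

/-- case `n = 0` of the derivative estimate for the remainder term of
the Volterra resolvent: with `S(t) = Σ_j e^{λ_j t} K_j` built from simple leading
characteristic roots, `R = r − S` with `‖R(t)‖ ≤ M e^{(α−ε)t}` implies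
`R′(t) = O(e^{(α−ε)t})` as `t → ∞`. -/
theorem stmt4 (d : ℕ) (α ε : ℝ) (hε : 0 < ε) (N : ℕ) (hN : 1 ≤ N)
    (μ : Matrix (Fin d) (Fin d) (MeasureTheory.SignedMeasure ℝ))
    (hμ : ∀ i j, IntegrableOn (fun s => Real.exp (-((α - ε) * s))) (Ici 0)
      (μ i j).totalVariation)
    (lam : Fin N → ℂ) (hlam : ∀ j, (lam j).re = α)
    (K : Fin N → Matrix (Fin d) (Fin d) ℂ)
    (hK : ∀ j, (lam j • (1 : Matrix (Fin d) (Fin d) ℂ) - muHat μ (lam j)) * K j = 0)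
    (r r' : ℝ → Matrix (Fin d) (Fin d) ℝ)
    (hr : ∀ t ∈ Ici (0 : ℝ), ∀ i k,
      HasDerivWithinAt (fun u => r u i k) (r' t i k) (Ici 0) t)
    (hreq : ∀ t ≥ (0 : ℝ), r' t = measConv μ r t)
    (M : ℝ) (hM : 0 < M)
    (hRbd : ∀ t ≥ (0 : ℝ),
      frobC ((r t).map (Complex.ofReal) - ∑ j, Complex.exp (lam j * t) • K j)
        ≤ M * Real.exp ((α - ε) * t)) :
    ∃ M₁ t₁ : ℝ, ∀ t ≥ t₁,
      frobC ((r' t).map (Complex.ofReal) - ∑ j, (lam j * Complex.exp (lam j * t)) • K j)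
        ≤ M₁ * Real.exp ((α - ε) * t) := by
  
  classical
  have hC0 : ∀ i j, (0:ℝ) ≤ ∫ s in Ici 0, Real.exp (-((α - ε) * s)) ∂(μ i j).totalVariation :=
    fun i j => integral_nonneg fun s => (Real.exp_pos _).le
  set C : Fin d → Fin d → ℝ :=
    fun i j => ∫ s in Ici 0, Real.exp (-((α - ε) * s)) ∂(μ i j).totalVariation with hCdef
  refine ⟨∑ i, ∑ k, ∑ j, C i j * (M + ∑ m, ‖K m j k‖), 0, ?_⟩
  intro t ht
  have hrc : ∀ j k, ContinuousOn (fun u => r u j k) (Ici 0) :=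
    fun j k u hu => (hr u hu j k).continuousWithinAt
  have key : ∀ i k,
      ‖((r' t).map Complex.ofReal - ∑ m, (lam m * Complex.exp (lam m * t)) • K m) i k‖
        ≤ (∑ j, C i j * (M + ∑ m, ‖K m j k‖)) * Real.exp ((α - ε) * t) := by
    intro i k
    set f₀ : Fin d → ℝ → ℂ := fun j s => ((r (t - s) j k : ℝ) : ℂ) with hf₀def
    set fm : Fin N → Fin d → ℝ → ℂ :=
      fun m j s => K m j k * Complex.exp (lam m * ((t:ℂ) - (s:ℂ))) with hfmdef
    have hfm_int : ∀ m j, IntegrableOn (fm m j) (Ici 0) (μ i j).totalVariation :=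
      fun m j => exp_shift_integrable (μ i j) hε (hμ i j) (lam m) (hlam m) _ t ht
    have hf₀c : ∀ j, ContinuousOn (f₀ j) (Icc 0 t) := by
      intro j
      have h1 : ContinuousOn (fun s : ℝ => r (t - s) j k) (Icc 0 t) := by
        apply (hrc j k).comp (Continuous.continuousOn (by fun_prop))
        intro s hs
        exact sub_nonneg.2 hs.2
      exact Complex.continuous_ofReal.comp_continuousOn h1
    have htvfin : ∀ j, IsFiniteMeasure (μ i j).totalVariation := by
      intro j; rw [SignedMeasure.totalVariation]; infer_instance
    have hf₀_int : ∀ j, IntegrableOn (f₀ j) (Icc 0 t) (μ i j).totalVariation := by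
      intro j; have := htvfin j; exact (hf₀c j).integrableOn_compact isCompact_Icc
    have hdisj : Disjoint (Icc (0:ℝ) t) (Ioi t) := by
      apply Set.disjoint_left.mpr
      rintro x ⟨_, hx⟩ hx'
      exact absurd hx' (not_lt.2 hx)
    have hIoisub : Ioi t ⊆ Ici (0:ℝ) := fun s hs => le_trans ht (le_of_lt hs)
    have hsplit : ∀ m j, sInt (μ i j) (Ici 0) (fm m j)
        = sInt (μ i j) (Icc 0 t) (fm m j) + sInt (μ i j) (Ioi t) (fm m j) := by
      intro m j
      rw [← Icc_union_Ioi_eq_Ici ht]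
      exact sInt_union (μ i j) hdisj measurableSet_Ioi _
        ((hfm_int m j).mono_set Icc_subset_Ici_self)
        ((hfm_int m j).mono_set hIoisub)
    have hmu : ∀ m j, Complex.exp (lam m * t) * (muHat μ (lam m) i j * K m j k)
        = sInt (μ i j) (Ici 0) (fm m j) := by
      intro m j
      have hfun : fm m j = fun s : ℝ => (K m j k * Complex.exp (lam m * (t:ℂ)))
          * Complex.exp (-(lam m * (s:ℂ))) := by
        funext s
        show K m j k * Complex.exp (lam m * ((t:ℂ) - (s:ℂ))) = _
        rw [mul_assoc, ← Complex.exp_add]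
        ring_nf
      rw [hfun, sInt_const_mul]
      show _ = K m j k * Complex.exp (lam m * (t:ℂ)) *
        sInt (μ i j) (Ici 0) (fun s : ℝ => Complex.exp (-(lam m * (s:ℂ))))
      have : muHat μ (lam m) i j
          = sInt (μ i j) (Ici 0) (fun s : ℝ => Complex.exp (-(lam m * (s:ℂ)))) := rfl
      rw [this]; ring
    have hKe : ∀ m, lam m * K m i k = ∑ j, muHat μ (lam m) i j * K m j k := by
      intro m
      have h0 := congrFun (congrFun (hK m) i) k
      simp only [Matrix.mul_apply, Matrix.sub_apply, Matrix.smul_apply, Matrix.one_apply,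
        Matrix.zero_apply, smul_eq_mul, sub_mul, Finset.sum_sub_distrib, mul_ite, mul_one,
        mul_zero, ite_mul, zero_mul, Finset.sum_ite_eq, Finset.mem_univ, if_true] at h0
      exact sub_eq_zero.mp h0
    have e1 : (((r' t).map Complex.ofReal) i k : ℂ) = ∑ j, sInt (μ i j) (Icc 0 t) (f₀ j) := by
      rw [hreq t ht]
      show ((measConv μ r t i k : ℝ) : ℂ) = _
      rw [show measConv μ r t i k = ∑ j, sInt (μ i j) (Icc 0 t) (fun s => r (t - s) j k)
        from rfl]
      push_cast [sInt_ofReal]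
      rfl
    have e2 : ((∑ m, (lam m * Complex.exp (lam m * t)) • K m) i k : ℂ)
        = ∑ j, ∑ m, (sInt (μ i j) (Icc 0 t) (fm m j) + sInt (μ i j) (Ioi t) (fm m j)) := by
      rw [Matrix.sum_apply]
      simp only [Matrix.smul_apply, smul_eq_mul]
      calc ∑ m, lam m * Complex.exp (lam m * t) * K m i k
          = ∑ m, Complex.exp (lam m * t) * (lam m * K m i k) := by
            refine Finset.sum_congr rfl fun m _ => by ring
        _ = ∑ m, ∑ j, Complex.exp (lam m * t) * (muHat μ (lam m) i j * K m j k) := by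
            refine Finset.sum_congr rfl fun m _ => ?_
            rw [hKe m, Finset.mul_sum]
        _ = ∑ m, ∑ j, sInt (μ i j) (Ici 0) (fm m j) :=
            Finset.sum_congr rfl fun m _ => Finset.sum_congr rfl fun j _ => hmu m j
        _ = ∑ j, ∑ m, sInt (μ i j) (Ici 0) (fm m j) := Finset.sum_comm
        _ = _ := Finset.sum_congr rfl fun j _ => Finset.sum_congr rfl fun m _ => hsplit m j
    have e3 : ∀ j, sInt (μ i j) (Icc 0 t) (fun s => f₀ j s - ∑ m, fm m j s)
        = sInt (μ i j) (Icc 0 t) (f₀ j) - ∑ m, sInt (μ i j) (Icc 0 t) (fm m j) := by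
      intro j
      rw [sInt_sub (μ i j) _ _ _ (hf₀_int j)
        (integrable_finset_sum _ fun m _ => (hfm_int m j).mono_set Icc_subset_Ici_self),
        sInt_finset_sum (μ i j) _ _ _
          fun m _ => (hfm_int m j).mono_set Icc_subset_Ici_self]
    have hentry : ((r' t).map Complex.ofReal - ∑ m, (lam m * Complex.exp (lam m * t)) • K m) i k
        = (∑ j, sInt (μ i j) (Icc 0 t) (fun s => f₀ j s - ∑ m, fm m j s))
          - ∑ j, ∑ m, sInt (μ i j) (Ioi t) (fm m j) := by
      rw [Matrix.sub_apply, e1, e2]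
      rw [Finset.sum_congr rfl fun j _ => e3 j]
      rw [Finset.sum_sub_distrib]
      rw [Finset.sum_congr rfl fun (j : Fin d) (_ : j ∈ Finset.univ) =>
        (Finset.sum_add_distrib (s := Finset.univ)
          (f := fun m => sInt (μ i j) (Icc 0 t) (fm m j))
          (g := fun m => sInt (μ i j) (Ioi t) (fm m j)))]
      rw [Finset.sum_add_distrib]
      ring
    have hbound1 : ∀ j, ‖sInt (μ i j) (Icc 0 t) (fun s => f₀ j s - ∑ m, fm m j s)‖
        ≤ M * C i j * Real.exp ((α - ε) * t) := by
      intro j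
      refine icc_bound (μ i j) hε (hμ i j) t ht M hM.le _ ?_ ?_
      · intro s hs
        have hts : (0:ℝ) ≤ t - s := sub_nonneg.2 hs.2
        have hfr := hRbd (t - s) hts
        have hEq : f₀ j s - ∑ m, fm m j s
            = ((r (t - s)).map Complex.ofReal
                - ∑ m, Complex.exp (lam m * ((t - s : ℝ) : ℂ)) • K m) j k := by
          simp only [Matrix.sub_apply, Matrix.map_apply, Matrix.sum_apply, Matrix.smul_apply,
            smul_eq_mul, hf₀def, hfmdef]
          congr 1
          refine Finset.sum_congr rfl fun m _ => ?_
          rw [mul_comm]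
          congr 1
          push_cast
          ring
        rw [hEq]
        exact le_trans (entry_le_frobC _ j k) hfr
      · refine ContinuousOn.aestronglyMeasurable ?_ measurableSet_Icc
        refine (hf₀c j).sub ?_
        exact (continuous_finset_sum _ fun m _ => by fun_prop).continuousOn
    have hbound2 : ∀ j m, ‖sInt (μ i j) (Ioi t) (fm m j)‖
        ≤ ‖K m j k‖ * C i j * Real.exp ((α - ε) * t) :=
      fun j m => tail_bound (μ i j) hε (hμ i j) (lam m) (hlam m) (K m j k) t ht
    rw [hentry]
    calc ‖_ - _‖ ≤ ‖∑ j, sInt (μ i j) (Icc 0 t) (fun s => f₀ j s - ∑ m, fm m j s)‖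
          + ‖∑ j, ∑ m, sInt (μ i j) (Ioi t) (fm m j)‖ := norm_sub_le _ _
      _ ≤ (∑ j, M * C i j * Real.exp ((α - ε) * t))
          + ∑ j, ∑ m, ‖K m j k‖ * C i j * Real.exp ((α - ε) * t) := by
          refine add_le_add ?_ ?_
          · exact (norm_sum_le _ _).trans (Finset.sum_le_sum fun j _ => hbound1 j)
          · refine (norm_sum_le _ _).trans (Finset.sum_le_sum fun j _ => ?_)
            exact (norm_sum_le _ _).trans (Finset.sum_le_sum fun m _ => hbound2 j m)
      _ = (∑ j, C i j * (M + ∑ m, ‖K m j k‖)) * Real.exp ((α - ε) * t) := by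
          rw [Finset.sum_mul]
          rw [← Finset.sum_add_distrib]
          refine Finset.sum_congr rfl fun j _ => ?_
          rw [← Finset.sum_mul, ← Finset.sum_mul]
          ring
  calc frobC ((r' t).map Complex.ofReal - ∑ m, (lam m * Complex.exp (lam m * t)) • K m)
      ≤ ∑ i, ∑ k, ‖((r' t).map Complex.ofReal
          - ∑ m, (lam m * Complex.exp (lam m * t)) • K m) i k‖ := frobC_le_sum _
    _ ≤ ∑ i, ∑ k, (∑ j, C i j * (M + ∑ m, ‖K m j k‖)) * Real.exp ((α - ε) * t) :=
        Finset.sum_le_sum fun i _ => Finset.sum_le_sum fun k _ => key i k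
    _ = (∑ i, ∑ k, ∑ j, C i j * (M + ∑ m, ‖K m j k‖)) * Real.exp ((α - ε) * t) := by
        rw [Finset.sum_mul]
        exact Finset.sum_congr rfl fun i _ => (Finset.sum_mul _ _ _).symm
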